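/- Let C be an (n+1)×(d+1) real matrix whose columns are linearly independent, let δ ∈ ℝ^{d+1} be in the row space, let A = {α ∈ ℝ^{n+1} : α C = δ} (an affine subspace of dimension n−d), let A_0 be its translate through the origin, and assume the last column of C is the all-ones vector 1. Let A^⊥ be the orthogonal complement of A_0 within the hyperplane V = 1^⊥ ⊂ ℝ^{n+1}. Then the orthogonal projection of the column space of C onto A^⊥ has dimension d. -/

import Mathlib

open Finset

/-- Proposition "perp dim": let `C` be an `(n+1)×(d+1)` real matrix with
linearly independent columns whose last column is the all-ones vector, let `δ`
lie in the row space of `C`, let `A₀ = {α : αC = 0}` (the translate through the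
origin of `A = {α : αC = δ}`), and let `A^⊥` be the orthogonal complement of
`A₀` inside the hyperplane `V = 1^⊥`. Then the orthogonal projection of the
column space of `C` onto `A^⊥` has dimension `d`. -/
theorem stmt11 (n d : ℕ) (C : Matrix (Fin (n + 1)) (Fin (d + 1)) ℝ)
    (hcols : LinearIndependent ℝ
      (fun j : Fin (d + 1) =>
        ((WithLp.linearEquiv 2 ℝ (Fin (n + 1) → ℝ)).symm (fun i => C i j) :
          EuclideanSpace ℝ (Fin (n + 1)))))
    (hlast : ∀ i, C i (Fin.last d) = 1)
    (δ : Fin (d + 1) → ℝ)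
    (hδ : δ ∈ Submodule.span ℝ (Set.range fun i => C i))
    (A0 V1 Aperp : Submodule ℝ (EuclideanSpace ℝ (Fin (n + 1))))
    (hA0 : A0 = LinearMap.ker ((Matrix.vecMulLinear C).comp
      (WithLp.linearEquiv 2 ℝ (Fin (n + 1) → ℝ)).toLinearMap))
    (hV1 : V1 = LinearMap.ker
      ((∑ i : Fin (n + 1), LinearMap.proj i : ((Fin (n + 1)) → ℝ) →ₗ[ℝ] ℝ).comp
        (WithLp.linearEquiv 2 ℝ (Fin (n + 1) → ℝ)).toLinearMap))
    (hAperp : Aperp = V1 ⊓ A0ᗮ) :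
    Module.finrank ℝ
      ((Submodule.span ℝ (Set.range fun j : Fin (d + 1) =>
          ((WithLp.linearEquiv 2 ℝ (Fin (n + 1) → ℝ)).symm (fun i => C i j) :
            EuclideanSpace ℝ (Fin (n + 1))))).map
        (Submodule.orthogonalProjectionOnto Aperp).toLinearMap) = d := by
  set f : Fin (d + 1) → EuclideanSpace ℝ (Fin (n + 1)) := fun j =>
    ((WithLp.linearEquiv 2 ℝ (Fin (n + 1) → ℝ)).symm (fun i => C i j)) with hf
  set W : Submodule ℝ (EuclideanSpace ℝ (Fin (n + 1))) := Submodule.span ℝ (Set.range f) with hW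
  -- A0 = Wᗮ
  have hA0W : A0 = Wᗮ := by
    rw [hA0]
    ext x
    constructor
    · intro hx
      rw [Submodule.mem_orthogonal]
      intro u hu
      induction hu using Submodule.span_induction with
      | mem u hu =>
          obtain ⟨j, rfl⟩ := hu
          simp only [LinearMap.mem_ker, LinearMap.comp_apply] at hx
          have := congrFun hx j
          simpa [hf, PiLp.inner_apply, Matrix.vecMul, dotProduct, mul_comm,
            WithLp.linearEquiv, Matrix.vecMulLinear] using this
      | zero => simp
      | add u v _ _ hu hv => rw [inner_add_left, hu, hv, add_zero]
      | smul c u _ hu => rw [inner_smul_left, hu, mul_zero]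
    · intro hx
      rw [Submodule.mem_orthogonal] at hx
      simp only [LinearMap.mem_ker, LinearMap.comp_apply]
      funext j
      have := hx _ (Submodule.subset_span (Set.mem_range_self j))
      simpa [hf, PiLp.inner_apply, Matrix.vecMul, dotProduct, mul_comm,
        WithLp.linearEquiv, Matrix.vecMulLinear] using this
  have hA0perp : A0ᗮ = W := by rw [hA0W, Submodule.orthogonal_orthogonal]
  -- the all-ones vector
  set e : EuclideanSpace ℝ (Fin (n + 1)) :=
    (WithLp.linearEquiv 2 ℝ (Fin (n + 1) → ℝ)).symm (fun _ => 1) with he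
  have heW : e ∈ W := by
    have : f (Fin.last d) = e := by
      simp only [hf, he]
      congr 1
      funext i
      exact hlast i
    rw [← this]
    exact Submodule.subset_span (Set.mem_range_self _)
  -- V1 = (span {e})ᗮ
  have hV1e : V1 = (ℝ ∙ e)ᗮ := by
    rw [hV1]
    ext x
    rw [Submodule.mem_orthogonal_singleton_iff_inner_right]
    simp [he, PiLp.inner_apply, WithLp.linearEquiv, LinearMap.sum_apply]
  have heV1 : e ∉ V1 := by
    rw [hV1e, Submodule.mem_orthogonal_singleton_iff_inner_right]
    simp [he, PiLp.inner_apply, WithLp.linearEquiv]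
    exact fun h => one_ne_zero (congrFun h 0)
  -- dimensions
  have htotal : Module.finrank ℝ (EuclideanSpace ℝ (Fin (n + 1))) = n + 1 := by
    simp [finrank_euclideanSpace]
  have hWrank : Module.finrank ℝ W = d + 1 := by
    rw [hW, finrank_span_eq_card hcols, Fintype.card_fin]
  have hV1rank : Module.finrank ℝ V1 = n := by
    have h1 : Module.finrank ℝ (ℝ ∙ e) = 1 := by
      apply finrank_span_singleton
      intro h
      apply heV1
      rw [h]; exact Submodule.zero_mem _
    have := Submodule.finrank_add_finrank_orthogonal (K := ℝ ∙ e)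
    rw [h1, htotal] at this
    rw [hV1e]
    omega
  have hsup : W ⊔ V1 = ⊤ := by
    apply Submodule.eq_top_of_finrank_eq
    rw [htotal]
    have hlt : V1 < W ⊔ V1 := by
      rw [lt_iff_le_and_ne]
      refine ⟨le_sup_right, fun h => heV1 ?_⟩
      rw [h]
      exact (le_sup_left : W ≤ W ⊔ V1) heW
    have h2 := Submodule.finrank_lt_finrank_of_lt hlt
    have h3 := Submodule.finrank_le (W ⊔ V1)
    rw [htotal] at h3
    omega
  have hAperpW : Aperp = V1 ⊓ W := by rw [hAperp, hA0perp]
  have hAperprank : Module.finrank ℝ Aperp = d := by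
    have := Submodule.finrank_sup_add_finrank_inf_eq W V1
    rw [hsup, finrank_top, htotal, hWrank, hV1rank] at this
    rw [hAperpW, inf_comm]
    omega
  -- image of projection is ⊤
  have hmap : W.map (Submodule.orthogonalProjectionOnto Aperp).toLinearMap = ⊤ := by
    apply le_antisymm le_top
    intro y _
    rw [Submodule.mem_map]
    refine ⟨(y : EuclideanSpace ℝ (Fin (n + 1))), ?_, ?_⟩
    · exact (hAperpW.le.trans inf_le_right) y.2
    · exact Submodule.orthogonalProjectionOnto_mem_subspace_eq_self y
  rw [hmap, finrank_top, hAperprank]
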